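/- Let P be a compact self-adjoint operator on a Hilbert space with eigenvalues λᵢ sorted descending and orthonormal eigenvectors φᵢ, and let f₁,...,fₘ be linearly independent vectors whose span equals the span of φ₁,...,φₘ. Then, with P_{ij} = ⟨fᵢ, P fⱼ⟩ and Q_{ij} = ⟨fᵢ, fⱼ⟩, one has trace(P Q⁻¹) = λ₁ + ... + λₘ. -/

import Mathlib

open Matrix

/-- Equality case (Lemma 1) of the subspace variational theorem: if `f 0, ..., f (m-1)`
are linearly independent vectors spanning the same subspace as the top `m` orthonormal
eigenvectors `φ 0, ..., φ (m-1)` of a compact self-adjoint operator `P` with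
descending eigenvalues `lam`, then with `Pmat i j = ⟪f i, P (f j)⟫` and
`Q i j = ⟪f i, f j⟫`, one has `trace (Pmat Q⁻¹) = lam 0 + ... + lam (m-1)`. -/
theorem gmrq_equality_on_leading_eigenspace
    {H : Type*} [NormedAddCommGroup H] [InnerProductSpace ℝ H] [CompleteSpace H]
    (P : H →L[ℝ] H) (hP : IsSelfAdjoint P) (hPc : IsCompactOperator ⇑P)
    (lam : ℕ → ℝ) (hlam : Antitone lam)
    (φ : ℕ → H) (hφo : Orthonormal ℝ φ)
    (hEig : ∀ i, P (φ i) = lam i • φ i)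
    (m : ℕ) (f : Fin m → H) (hfli : LinearIndependent ℝ f)
    (hspan : Submodule.span ℝ (Set.range f)
      = Submodule.span ℝ (Set.range fun i : Fin m => φ i))
    (Pmat Q : Matrix (Fin m) (Fin m) ℝ)
    (hPmat : ∀ i j, Pmat i j = (inner ℝ (f i) (P (f j)) : ℝ))
    (hQ : ∀ i j, Q i j = (inner ℝ (f i) (f j) : ℝ)) :
    (Pmat * Q⁻¹).trace = ∑ i : Fin m, lam i := by
  classical
  have hmem : ∀ j : Fin m, f j ∈ Submodule.span ℝ (Set.range fun i : Fin m => φ i) := by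
    intro j; rw [← hspan]; exact Submodule.subset_span ⟨j, rfl⟩
  choose c hc using fun j => (Submodule.mem_span_range_iff_exists_fun ℝ).mp (hmem j)
  set C : Matrix (Fin m) (Fin m) ℝ := Matrix.of fun k j => c j k with hCdef
  have hortho : ∀ k l : Fin m, (inner ℝ (φ (k : ℕ)) (φ (l : ℕ)) : ℝ)
      = if k = l then 1 else 0 := by
    intro k l
    rw [orthonormal_iff_ite.mp hφo]
    simp [Fin.val_inj]
  have hQ' : Q = Cᵀ * C := by
    ext i j
    rw [hQ, ← hc i, ← hc j]
    simp [hCdef, Matrix.mul_apply, inner_sum, sum_inner, real_inner_smul_left,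
      real_inner_smul_right, hortho, mul_ite, ite_mul]
    exact Finset.sum_congr rfl fun k _ => mul_comm _ _
  have hPf : ∀ j : Fin m, P (f j) = ∑ k : Fin m, (c j k * lam (k : ℕ)) • φ (k : ℕ) := by
    intro j
    rw [← hc j, map_sum]
    simp [hEig, smul_smul]
  set Λ : Matrix (Fin m) (Fin m) ℝ := Matrix.diagonal fun i : Fin m => lam (i : ℕ) with hΛdef
  have hP' : Pmat = Cᵀ * Λ * C := by
    ext i j
    rw [hPmat, hPf, ← hc i]
    simp only [hCdef, hΛdef, Matrix.mul_apply, Matrix.diagonal_apply, Matrix.transpose_apply,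
      Matrix.of_apply, inner_sum, sum_inner, real_inner_smul_left, real_inner_smul_right,
      hortho, mul_ite, ite_mul, mul_one, mul_zero, one_mul, zero_mul,
      Finset.sum_ite_eq, Finset.sum_ite_eq', Finset.mem_univ, if_true]
    apply Finset.sum_congr rfl
    intro k _
    ring
  -- invertibility of C
  have hCinj : Function.Injective C.mulVec := by
    intro x y hxy
    have hz : C.mulVec (x - y) = 0 := by
      rw [Matrix.mulVec_sub, hxy, sub_self]
    have hsum : ∑ j : Fin m, (x - y) j • f j = 0 := by
      calc ∑ j : Fin m, (x - y) j • f j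
          = ∑ j : Fin m, (x - y) j • (∑ k : Fin m, c j k • φ (k : ℕ)) := by
            simp_rw [hc]
        _ = ∑ k : Fin m, (C.mulVec (x - y)) k • φ (k : ℕ) := by
            simp_rw [Finset.smul_sum, smul_smul]
            rw [Finset.sum_comm]
            apply Finset.sum_congr rfl
            intro k _
            rw [Matrix.mulVec, dotProduct, Finset.sum_smul]
            apply Finset.sum_congr rfl
            intro j _
            simp [hCdef, mul_comm]
        _ = 0 := by rw [hz]; simp
    have := Fintype.linearIndependent_iff.mp hfli (x - y) hsum
    funext i
    have := this i
    simpa [sub_eq_zero] using this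
  have hCu : IsUnit C.det := by
    rw [← Matrix.isUnit_iff_isUnit_det]
    exact Matrix.mulVec_injective_iff_isUnit.mp hCinj
  have hCTu : IsUnit Cᵀ.det := by rwa [Matrix.det_transpose]
  rw [hP', hQ', Matrix.mul_inv_rev]
  have key : Cᵀ * Λ * C * (C⁻¹ * Cᵀ⁻¹) = Cᵀ * Λ * Cᵀ⁻¹ := by
    rw [← Matrix.mul_assoc, Matrix.mul_assoc (Cᵀ * Λ) C, Matrix.mul_nonsing_inv _ hCu,
      Matrix.mul_one]
  rw [key, Matrix.trace_mul_cycle, Matrix.nonsing_inv_mul _ hCTu, Matrix.one_mul,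
    Matrix.trace_diagonal]
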